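/- arXiv:1909.08920 — 2 statements merged into one kernel-verified Lean document; each statement's English description precedes it below -/
import Mathlib

section
/- Assume n ≥ 2 and fix a non-manipulating agent a₂. For every S ∈ Δ, every item i ∈ S ∖ D(a₂, b(a₂,S)) satisfies rk_{a₂}(b(a₂,S)) + 1 ≤ rk_{a₂}(i) ≤ rk_{a₂}(b(a₂,S)) + 2·rg^max. -/
/-- Items are `Fin m`; a ranking is a bijection `Fin m ≃ Fin m`
(`rk i` is the rank of item `i`; lower rank = more preferred).
`IsBest rk S b` says that `b` is the item of `I ∖ S` with minimum rank,
i.e. `b = b(a, S)` for an agent with ranking `rk`. -/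
def IsBest {m : ℕ} (rk : Fin m ≃ Fin m) (S : Finset (Fin m)) (b : Fin m) : Prop :=
  b ∉ S ∧ ∀ j ∉ S, rk b ≤ rk j

/-- `D rk i` : the set of items strictly preferred to `i` under the ranking `rk`. -/
def D {m : ℕ} (rk : Fin m ≃ Fin m) (i : Fin m) : Finset (Fin m) :=
  Finset.univ.filter fun j => rk j < rk i

/-- `Δ` : the family of proper subsets `S ⊊ I` with `⋃_{a ≠ a₁} D(a, b(a,S)) = S`. -/
def Delta {A : Type*} {m : ℕ} (a₁ : A) (rk : A → Fin m ≃ Fin m) :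
    Set (Finset (Fin m)) :=
  {S | S ⊂ Finset.univ ∧ ∀ b : A → Fin m, (∀ a, IsBest (rk a) S (b a)) →
    {j : Fin m | ∃ a, a ≠ a₁ ∧ j ∈ D (rk a) (b a)} = ↑S}

/-- The ranks (as natural numbers) given to item `i` by the non-manipulators. -/
def nonManipRanks {A : Type*} [Fintype A] [DecidableEq A] {m : ℕ}
    (a₁ : A) (rk : A → Fin m ≃ Fin m) (i : Fin m) : Finset ℕ :=
  (Finset.univ.filter fun a => a ≠ a₁).image fun a => (rk a i : ℕ)

/-- The range of an item: `max_{a ≠ a₁} rk_a(i) − min_{a ≠ a₁} rk_a(i) + 1`. -/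
def rg {A : Type*} [Fintype A] [DecidableEq A] {m : ℕ}
    (a₁ : A) (rk : A → Fin m ≃ Fin m) (i : Fin m) : ℕ :=
  (nonManipRanks a₁ rk i).max.unbotD 0 - (nonManipRanks a₁ rk i).min.untopD 0 + 1

/-- `rg^max` : the maximum range of an item. -/
def rgMax {A : Type*} [Fintype A] [DecidableEq A] {m : ℕ}
    (a₁ : A) (rk : A → Fin m ≃ Fin m) : ℕ :=
  Finset.univ.sup fun i : Fin m => rg a₁ rk i


/-- assume `n ≥ 2` and fix a non-manipulator `a₂`.  For every
`S ∈ Δ`, every item `i ∈ S ∖ D(a₂, b(a₂,S))` satisfies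
`rk_{a₂}(b(a₂,S)) + 1 ≤ rk_{a₂}(i) ≤ rk_{a₂}(b(a₂,S)) + 2·rg^max`. -/
theorem statement9 {A : Type*} [Fintype A] [DecidableEq A] {m : ℕ}
    (a₁ a₂ : A) (ha₂ : a₂ ≠ a₁) (rk : A → Fin m ≃ Fin m)
    (hn : 2 ≤ Fintype.card A)
    (S : Finset (Fin m)) (hS : S ∈ Delta a₁ rk)
    (b₂ : Fin m) (hb₂ : IsBest (rk a₂) S b₂)
    (i : Fin m) (hi : i ∈ S \ D (rk a₂) b₂) :
    (rk a₂ b₂ : ℕ) + 1 ≤ (rk a₂ i : ℕ) ∧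
      (rk a₂ i : ℕ) ≤ (rk a₂ b₂ : ℕ) + 2 * rgMax a₁ rk := by
  classical
  obtain ⟨hiS, hiD⟩ := Finset.mem_sdiff.1 hi
  have hb₂S := hb₂.1
  have hne : i ≠ b₂ := fun h => hb₂S (h ▸ hiS)
  -- lower bound
  have hle : rk a₂ b₂ ≤ rk a₂ i := by
    by_contra h
    exact hiD (Finset.mem_filter.2 ⟨Finset.mem_univ _, not_le.1 h⟩)
  have hnev : rk a₂ i ≠ rk a₂ b₂ := fun h => hne ((rk a₂).injective h)
  have hlow : (rk a₂ b₂ : ℕ) + 1 ≤ (rk a₂ i : ℕ) := by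
    have := Fin.val_ne_of_ne hnev
    have h2 : (rk a₂ b₂ : ℕ) ≤ (rk a₂ i : ℕ) := hle
    omega
  refine ⟨hlow, ?_⟩
  -- existence of best items
  have hbest : ∀ a : A, ∃ bb : Fin m, IsBest (rk a) S bb := by
    intro a
    have hSne : Sᶜ.Nonempty := by
      obtain ⟨x, -, hx⟩ := Finset.exists_of_ssubset hS.1
      exact ⟨x, Finset.mem_compl.2 hx⟩
    obtain ⟨bb, hbb, hmin⟩ := Finset.exists_min_image Sᶜ (fun j => rk a j) hSne
    exact ⟨bb, Finset.mem_compl.1 hbb, fun j hj => hmin j (Finset.mem_compl.2 hj)⟩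
  set b : A → Fin m := fun a => if a = a₂ then b₂ else Classical.choose (hbest a) with hbdef
  have hb : ∀ a, IsBest (rk a) S (b a) := by
    intro a
    by_cases h : a = a₂
    · subst h; simpa [hbdef] using hb₂
    · simpa [hbdef, h] using Classical.choose_spec (hbest a)
  have hmemset : i ∈ {j : Fin m | ∃ a, a ≠ a₁ ∧ j ∈ D (rk a) (b a)} := by
    rw [hS.2 b hb]; exact hiS
  obtain ⟨a₃, ha₃, hD3⟩ := hmemset
  have hD3' : rk a₃ i < rk a₃ (b a₃) := (Finset.mem_filter.1 hD3).2
  have ha₃₂ : a₃ ≠ a₂ := by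
    intro h
    subst h
    have : b a₃ = b₂ := by simp [hbdef]
    rw [this] at hD3'
    exact hnev (le_antisymm (le_of_lt hD3') hle)
  -- closeness lemma
  have close : ∀ (j : Fin m) (a a' : A), a ≠ a₁ → a' ≠ a₁ →
      (rk a j : ℕ) + 1 ≤ (rk a' j : ℕ) + rg a₁ rk j := by
    intro j a a' ha ha'
    set F := nonManipRanks a₁ rk j with hF
    have hmem : (rk a j : ℕ) ∈ F :=
      Finset.mem_image.2 ⟨a, Finset.mem_filter.2 ⟨Finset.mem_univ _, ha⟩, rfl⟩
    have hmem' : (rk a' j : ℕ) ∈ F :=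
      Finset.mem_image.2 ⟨a', Finset.mem_filter.2 ⟨Finset.mem_univ _, ha'⟩, rfl⟩
    have hFne : F.Nonempty := ⟨_, hmem⟩
    have hmax : F.max.unbotD 0 = F.max' hFne := by
      rw [← Finset.coe_max' hFne]; rfl
    have hmin : F.min.untopD 0 = F.min' hFne := by
      rw [← Finset.coe_min' hFne]; rfl
    have h1 : (rk a j : ℕ) ≤ F.max' hFne := Finset.le_max' _ _ hmem
    have h2 : F.min' hFne ≤ (rk a' j : ℕ) := Finset.min'_le _ _ hmem'
    have h3 : F.min' hFne ≤ F.max' hFne := Finset.min'_le _ _ (Finset.max'_mem _ hFne)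
    have hrg : rg a₁ rk j = F.max' hFne - F.min' hFne + 1 := by
      rw [rg, ← hF, hmax, hmin]
    omega
  -- chain of inequalities
  have c1 : (rk a₂ i : ℕ) + 1 ≤ (rk a₃ i : ℕ) + rg a₁ rk i := close i a₂ a₃ ha₂ ha₃
  have c2 : (rk a₃ i : ℕ) + 1 ≤ (rk a₃ (b a₃) : ℕ) := hD3'
  have c3 : (rk a₃ (b a₃) : ℕ) ≤ (rk a₃ b₂ : ℕ) := (hb a₃).2 b₂ hb₂S
  have c4 : (rk a₃ b₂ : ℕ) + 1 ≤ (rk a₂ b₂ : ℕ) + rg a₁ rk b₂ := close b₂ a₃ a₂ ha₃ ha₂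
  have r1 : rg a₁ rk i ≤ rgMax a₁ rk := Finset.le_sup (Finset.mem_univ i)
  have r2 : rg a₁ rk b₂ ≤ rgMax a₁ rk := Finset.le_sup (Finset.mem_univ b₂)
  omega
end

section
/- If n ≥ 2, then |Δ| ≤ m · 2^{2·rg^max}. -/
/-- if `n ≥ 2`, then `|Δ| ≤ m * 2 ^ (2 * rg^max)`. -/
theorem statement10 {A : Type*} [Fintype A] [DecidableEq A] {m : ℕ}
    (a₁ : A) (rk : A → Fin m ≃ Fin m) (hn : 2 ≤ Fintype.card A) :
    (Delta a₁ rk).ncard ≤ m * 2 ^ (2 * rgMax a₁ rk) := by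
  classical
  obtain ⟨a₂, ha₂⟩ := Fintype.exists_ne_of_one_lt_card (by omega) a₁
  set R := rgMax a₁ rk with hRdef
  have hrange : ∀ (a a' : A) (j : Fin m), a ≠ a₁ → a' ≠ a₁ →
      (rk a j : ℕ) ≤ (rk a' j : ℕ) + R := by
    intro a a' j ha ha'
    have hmem : (rk a j : ℕ) ∈ nonManipRanks a₁ rk j := by
      simp only [nonManipRanks, Finset.mem_image, Finset.mem_filter, Finset.mem_univ, true_and]
      exact ⟨a, ha, rfl⟩
    have hmem' : (rk a' j : ℕ) ∈ nonManipRanks a₁ rk j := by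
      simp only [nonManipRanks, Finset.mem_image, Finset.mem_filter, Finset.mem_univ, true_and]
      exact ⟨a', ha', rfl⟩
    have hne : (nonManipRanks a₁ rk j).Nonempty := ⟨_, hmem⟩
    have h1 := Finset.le_max' _ _ hmem
    have h2 := Finset.min'_le _ _ hmem'
    have hmax : (nonManipRanks a₁ rk j).max.unbotD 0 = (nonManipRanks a₁ rk j).max' hne := by
      rw [← Finset.coe_max' hne]; rfl
    have hmin : (nonManipRanks a₁ rk j).min.untopD 0 = (nonManipRanks a₁ rk j).min' hne := by
      rw [← Finset.coe_min' hne]; rfl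
    have hrg : rg a₁ rk j
        = (nonManipRanks a₁ rk j).max' hne - (nonManipRanks a₁ rk j).min' hne + 1 := by
      rw [rg, hmax, hmin]
    have hle : rg a₁ rk j ≤ R := Finset.le_sup (Finset.mem_univ j)
    omega
  rcases Nat.eq_zero_or_pos m with hm | hm
  · have hΔ : Delta a₁ rk = ∅ := by
      ext S
      simp only [Delta, Set.mem_setOf_eq, Set.mem_empty_iff_false, iff_false, not_and]
      intro hss
      exfalso
      obtain ⟨x, -, -⟩ := Finset.exists_of_ssubset hss
      exact absurd x.isLt (by omega)
    simp [hΔ]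
  · set W : Fin m → Finset (Fin m) := fun i =>
      Finset.univ.filter fun j =>
        (rk a₂ i : ℕ) < (rk a₂ j : ℕ) ∧ (rk a₂ j : ℕ) < (rk a₂ i : ℕ) + 2 * R with hWdef
    have hWcard : ∀ i, (W i).card ≤ 2 * R := by
      intro i
      have hc : (W i).card ≤ (Finset.Ico ((rk a₂ i : ℕ) + 1) ((rk a₂ i : ℕ) + 2 * R)).card := by
        apply Finset.card_le_card_of_injOn (fun j => (rk a₂ j : ℕ))
        · intro j hj
          simp only [hWdef, Finset.mem_coe, Finset.mem_filter, Finset.mem_univ, true_and] at hj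
          simp only [Finset.mem_coe, Finset.mem_Ico]
          omega
        · intro x _ y _ h
          exact (rk a₂).injective (Fin.ext h)
      rw [Nat.card_Ico] at hc
      omega
    set f : Finset (Fin m) → Fin m × Finset (Fin m) := fun S =>
      if h : Sᶜ.Nonempty then
        ((rk a₂).symm ((Sᶜ.image ⇑(rk a₂)).min' (h.image _)),
          S ∩ W ((rk a₂).symm ((Sᶜ.image ⇑(rk a₂)).min' (h.image _))))
      else (⟨0, hm⟩, ∅) with hfdef
    have hcompl : ∀ S ∈ Delta a₁ rk, Sᶜ.Nonempty := by
      intro S hS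
      obtain ⟨x, -, hxn⟩ := Finset.exists_of_ssubset hS.1
      exact ⟨x, Finset.mem_compl.mpr hxn⟩
    have hstruct : ∀ S ∈ Delta a₁ rk, ∀ h : Sᶜ.Nonempty,
        S = D (rk a₂) ((rk a₂).symm ((Sᶜ.image ⇑(rk a₂)).min' (h.image _))) ∪
            (S ∩ W ((rk a₂).symm ((Sᶜ.image ⇑(rk a₂)).min' (h.image _)))) := by
      intro S hS h
      set b : A → Fin m := fun a => (rk a).symm ((Sᶜ.image ⇑(rk a)).min' (h.image _)) with hbdef
      set i := (rk a₂).symm ((Sᶜ.image ⇑(rk a₂)).min' (h.image _)) with hidef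
      have hbest : ∀ a, IsBest (rk a) S (b a) := by
        intro a
        constructor
        · have hmem : (Sᶜ.image ⇑(rk a)).min' (h.image _) ∈ Sᶜ.image ⇑(rk a) :=
            Finset.min'_mem _ _
          obtain ⟨j, hj, hje⟩ := Finset.mem_image.mp hmem
          have hb : b a = j := by
            simp only [hbdef]
            exact (rk a).symm_apply_eq.mpr hje.symm
          rw [hb]
          exact Finset.mem_compl.mp hj
        · intro j hj
          have hmem : rk a j ∈ Sᶜ.image ⇑(rk a) :=
            Finset.mem_image_of_mem _ (Finset.mem_compl.mpr hj)
          have h2 := Finset.min'_le _ _ hmem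
          simpa only [hbdef, Equiv.apply_symm_apply] using h2
      have hU := hS.2 b hbest
      have hba₂ : b a₂ = i := rfl
      have hiN : i ∉ S := by rw [← hba₂]; exact (hbest a₂).1
      have hD : D (rk a₂) i ⊆ S := by
        intro j hj
        have hmem : j ∈ ({j : Fin m | ∃ a, a ≠ a₁ ∧ j ∈ D (rk a) (b a)} : Set (Fin m)) :=
          ⟨a₂, ha₂, by rwa [hba₂]⟩
        rw [hU] at hmem
        exact hmem
      have hSW : ∀ j ∈ S, j ∉ D (rk a₂) i → j ∈ W i := by
        intro j hjS hjD
        have hmem : j ∈ ({j : Fin m | ∃ a, a ≠ a₁ ∧ j ∈ D (rk a) (b a)} : Set (Fin m)) := by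
          rw [hU]; exact hjS
        obtain ⟨a, ha, hja⟩ := hmem
        have hlt : (rk a j : ℕ) < (rk a (b a) : ℕ) := by
          simpa only [D, Finset.mem_filter, Finset.mem_univ, true_and, Fin.lt_def] using hja
        have hba : (rk a (b a) : ℕ) ≤ (rk a i : ℕ) := (hbest a).2 i hiN
        have e1 := hrange a₂ a j ha₂ ha
        have e2 := hrange a a₂ i ha ha₂
        have hji : j ≠ i := fun hji => hiN (hji ▸ hjS)
        have hne2 : (rk a₂ j : ℕ) ≠ (rk a₂ i : ℕ) :=
          fun hh => hji ((rk a₂).injective (Fin.ext hh))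
        have hge : (rk a₂ i : ℕ) ≤ (rk a₂ j : ℕ) := by
          simpa only [D, Finset.mem_filter, Finset.mem_univ, true_and, Fin.lt_def,
            not_lt] using hjD
        simp only [hWdef, Finset.mem_filter, Finset.mem_univ, true_and]
        omega
      apply Finset.Subset.antisymm
      · intro j hj
        by_cases hd : j ∈ D (rk a₂) i
        · exact Finset.mem_union_left _ hd
        · exact Finset.mem_union_right _ (Finset.mem_inter.mpr ⟨hj, hSW j hj hd⟩)
      · intro j hj
        rcases Finset.mem_union.mp hj with hd | hd
        · exact hD hd
        · exact (Finset.mem_inter.mp hd).1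
    have hinj : Set.InjOn f (Delta a₁ rk) := by
      intro S₁ h₁ S₂ h₂ hfe
      have hc₁ := hcompl S₁ h₁
      have hc₂ := hcompl S₂ h₂
      simp only [hfdef, dif_pos hc₁, dif_pos hc₂, Prod.mk.injEq] at hfe
      have e₁ := hstruct S₁ h₁ hc₁
      have e₂ := hstruct S₂ h₂ hc₂
      rw [e₁, e₂, hfe.2, hfe.1]
    set T : Finset (Fin m × Finset (Fin m)) :=
      Finset.univ.biUnion (fun i => ((W i).powerset).image fun t => (i, t)) with hTdef
    have hsub : f '' (Delta a₁ rk) ⊆ ↑T := by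
      rintro p ⟨S, hS, rfl⟩
      have hc := hcompl S hS
      simp only [hfdef, dif_pos hc]
      rw [hTdef]
      rw [Finset.mem_coe, Finset.mem_biUnion]
      refine ⟨(rk a₂).symm ((Sᶜ.image ⇑(rk a₂)).min' (hc.image _)), Finset.mem_univ _, ?_⟩
      exact Finset.mem_image_of_mem _ (Finset.mem_powerset.mpr Finset.inter_subset_right)
    calc (Delta a₁ rk).ncard = (f '' Delta a₁ rk).ncard :=
          (Set.ncard_image_of_injOn hinj).symm
      _ ≤ (↑T : Set (Fin m × Finset (Fin m))).ncard :=
          Set.ncard_le_ncard hsub (Finset.finite_toSet T)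
      _ = T.card := Set.ncard_coe_finset T
      _ ≤ ∑ i : Fin m, (((W i).powerset).image fun t => (i, t)).card := by
          rw [hTdef]; exact Finset.card_biUnion_le
      _ ≤ ∑ _i : Fin m, 2 ^ (2 * R) := by
          apply Finset.sum_le_sum
          intro i _
          calc (((W i).powerset).image fun t => (i, t)).card
              ≤ (W i).powerset.card := Finset.card_image_le
            _ = 2 ^ (W i).card := Finset.card_powerset _
            _ ≤ 2 ^ (2 * R) := Nat.pow_le_pow_right (by norm_num) (hWcard i)
      _ = m * 2 ^ (2 * R) := by
          simp [Finset.sum_const, Finset.card_univ]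
end
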